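/- arXiv:1506.03404 — 2 statements merged into one kernel-verified Lean document; each statement's English description precedes it below -/
import Mathlib

section
/- Let R be a supertropical semiring such that eR is a nontrivial semifield (i.e. 𝒢(R) = eR \ {0} is a group under multiplication with 𝒢(R) ≠ {e}), and let (q,b) be a quadratic pair on an R-module V. Let x, y ∈ V \ {0}. If either (i) e·b(x,y)² ≤ e·q(x)·q(y), or (ii) both q(x) and q(y) lie in eR and e·b(x,y)² ≤ c·e·q(x)·q(y) for every c ∈ 𝒢(R) with c > e, then q is quasilinear on Rx + Ry, i.e. q(u+v) = q(u)+q(v) for all u, v ∈ Rx + Ry. -/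
open scoped Classical

namespace Supertrop

section Defs

variable (R : Type*) [CommSemiring R]

/-- The distinguished element `e = 1 + 1` of a semiring. -/
def eps : R := 1 + 1

/-- `R` is a supertropical semiring: `e` is additively idempotent, and the two
supertropical addition axioms hold. -/
def IsSupertropical : Prop :=
  eps R + eps R = eps R ∧
    (∀ x y : R, eps R * x ≠ eps R * y → x + y = x ∨ x + y = y) ∧
    (∀ x y : R, eps R * x = eps R * y → x + y = eps R * y)

/-- The ghost ideal `eR`, as a subset of `R`. -/
def eSet : Set R := Set.range (fun a : R => eps R * a)

/-- The tangible elements `𝒯(R) = R \ eR`. -/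
def tangible : Set R := {x : R | x ∉ eSet R}

/-- The nonzero ghost elements `𝒢(R) = eR \ {0}`. -/
def ghost : Set R := eSet R \ {0}

end Defs

section Orders

variable {R : Type*} [CommSemiring R]

/-- The minimal ordering on an additive monoid: `x ≤ y` iff `∃ z, x + z = y`. -/
def mle {M : Type*} [AddCommMonoid M] (x y : M) : Prop := ∃ z, x + z = y

/-- Strict minimal ordering. -/
def mlt {M : Type*} [AddCommMonoid M] (x y : M) : Prop := mle x y ∧ x ≠ y

/-- The (total) ordering of the bipotent semiring `eR`: `u ≤ v ⟺ u + v = v`. -/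
def gle (u v : R) : Prop := u + v = v

/-- The strict ordering of `eR`. -/
def glt (u v : R) : Prop := gle u v ∧ u ≠ v

end Orders

section SSF

variable (R : Type*) [CommSemiring R]

/-- `R` is a supersemifield: supertropical, every tangible element is invertible in `R`,
and `𝒢(R)` is a group under multiplication with identity `e`. -/
def IsSupersemifield : Prop :=
  IsSupertropical R ∧
    (∀ t ∈ tangible R, IsUnit t) ∧
    eps R ∈ ghost R ∧
    (∀ g ∈ ghost R, ∀ h ∈ ghost R, g * h ∈ ghost R) ∧
    (∀ g ∈ ghost R, ∃ h ∈ ghost R, g * h = eps R)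

/-- The supersemifield `R` is tangible: `e·𝒯(R) = 𝒢(R)`. -/
def TangibleSSF : Prop := (fun t => eps R * t) '' tangible R = ghost R

/-- Nontriviality: `𝒢(R) ≠ {e}`. -/
def NontrivialG : Prop := ghost R ≠ {eps R}

/-- `R` is discrete: `𝒢(R)` has a smallest element `> e`. -/
def DiscreteR : Prop :=
  ∃ c ∈ ghost R, glt (eps R) c ∧ ∀ d ∈ ghost R, glt (eps R) d → gle c d

/-- `R` is dense: `𝒢(R)` has no smallest element `> e`. -/
def DenseR : Prop := ¬ DiscreteR R

/-- `eR` is a semifield: `e ≠ 0`, `𝒢(R)` is closed under multiplication, and every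
element of `𝒢(R)` is invertible in `eR` with respect to the identity `e`. -/
def GhostSemifield : Prop :=
  eps R ∈ ghost R ∧
    (∀ g ∈ ghost R, ∀ h ∈ ghost R, g * h ∈ ghost R) ∧
    (∀ g ∈ ghost R, ∃ h ∈ ghost R, g * h = eps R)

end SSF

section Quad

variable {R : Type*} [CommSemiring R] {V : Type*} [AddCommMonoid V] [Module R V]

/-- `b` is a (symmetric bilinear) companion of the quadratic form `q`. -/
def IsCompanion (q : V → R) (b : V → V → R) : Prop :=
  (∀ x y, b x y = b y x) ∧
    (∀ x y z, b (x + y) z = b x z + b y z) ∧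
    (∀ (a : R) (x y : V), b (a • x) y = a * b x y) ∧
    (∀ x y, q (x + y) = q x + q y + b x y)

/-- `(q, b)` is a quadratic pair on `V`. -/
def IsQuadPair (q : V → R) (b : V → V → R) : Prop :=
  (∀ (a : R) (x : V), q (a • x) = a ^ 2 * q x) ∧ IsCompanion q b

/-- `q` is a quadratic form on `V`. -/
def IsQuadForm (q : V → R) : Prop := ∃ b, IsQuadPair q b

/-- `q` is quasilinear (i.e. additive) on the submodule `W`. -/
def QuasilinearOn (q : V → R) (W : Submodule R V) : Prop :=
  ∀ u ∈ W, ∀ v ∈ W, q (u + v) = q u + q v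

/-- `x` is `q`-minimal: `q x' < q x` for every `x' < x` (in the minimal orderings). -/
def QMinimal (q : V → R) (x : V) : Prop := ∀ x' : V, mlt x' x → mlt (q x') (q x)

/-- The maximum of two elements of `R` with respect to the minimal ordering. -/
noncomputable def rsup (a b : R) : R := if a = b then a else a + b

/-- The componentwise maximum `x ∨ y` (in the minimal ordering) of two vectors
of a free module. -/
noncomputable def vsup {ι : Type*} (bV : Module.Basis ι R V) (x y : V) : V :=
  bV.repr.symm (Finsupp.zipWith rsup (by simp [rsup]) (bV.repr x) (bV.repr y))

/-- The restriction `x(J)` of a vector to a subset `J` of the index set of the base. -/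
noncomputable def restrict {ι : Type*} (bV : Module.Basis ι R V) (x : V) (J : Finset ι) : V :=
  ∑ i ∈ J, (bV.repr x) i • bV i

/-- The CS-ratio `CS(x,y) = e·b(x,y)² · (e·q(x)·q(y))⁻¹`, where `inv` is the
inversion of the semifield `eR`. -/
noncomputable def CSratio (q : V → R) (b : V → V → R) (inv : R → R) (x y : V) : R :=
  eps R * (b x y) ^ 2 * inv (eps R * (q x * q y))

end Quad

section Aux

variable {R : Type*} [CommSemiring R]

local notation "ε" => eps R

lemma e_mul_e (hR : IsSupertropical R) : ε * ε = ε := by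
  calc (eps R) * eps R = eps R + eps R := by unfold eps; ring
  _ = eps R := hR.1

lemma e_idem (hR : IsSupertropical R) (a : R) : ε * (ε * a) = ε * a := by
  rw [← mul_assoc, e_mul_e hR]

lemma gadd (hR : IsSupertropical R) (a : R) : ε * a + ε * a = ε * a := by
  have h := hR.2.2 (ε * a) (ε * a) rfl
  rwa [e_idem hR] at h

lemma eq_zero (hR : IsSupertropical R) (a : R) (h : ε * a = 0) : a = 0 := by
  have h2 := hR.2.2 a 0 (by rw [h, mul_zero])
  simpa using h2

lemma gh_add {u v : R} (hu : ε * u = u) (hv : ε * v = v) : ε * (u + v) = u + v := by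
  rw [mul_add, hu, hv]

lemma gh_mul {u v : R} (hu : ε * u = u) (hv : ε * v = v) : ε * (u * v) = u * v := by
  rw [← mul_assoc, hu]

lemma gle_trans {u v w : R} (h1 : gle u v) (h2 : gle v w) : gle u w := by
  unfold gle at *
  rw [← h2, ← add_assoc, h1]

lemma gle_antisymm {u v : R} (h1 : gle u v) (h2 : gle v u) : u = v := by
  unfold gle at *
  rw [← h2, add_comm]; exact h1

lemma gle_add {u v w : R} (h1 : gle u w) (h2 : gle v w) : gle (u + v) w := by
  unfold gle at *
  rw [add_assoc, h2, h1]

lemma gle_mul {u v : R} (w : R) (h : gle u v) : gle (u * w) (v * w) := by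
  unfold gle at *
  rw [← add_mul, h]

lemma gle_zero (u : R) : gle 0 u := zero_add u

lemma gle_congr {u u' v v' : R} (hu : u = u') (hv : v = v') (h : gle u v) : gle u' v' :=
  hu ▸ hv ▸ h

lemma gle_refl' (hR : IsSupertropical R) {u : R} (hu : ε * u = u) : gle u u := by
  unfold gle
  have := hR.2.2 u u rfl
  rwa [hu] at this

lemma gle_summand (hR : IsSupertropical R) (z w : R) : gle (ε * z) (ε * (z + w)) := by
  unfold gle
  rw [mul_add, ← add_assoc, gadd hR]

lemma gle_total (hR : IsSupertropical R) (a b : R) :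
    gle (ε * a) (ε * b) ∨ gle (ε * b) (ε * a) := by
  by_cases h : ε * (ε * a) = ε * (ε * b)
  · rw [e_idem hR, e_idem hR] at h
    left; unfold gle; rw [h, gadd hR]
  · rcases hR.2.1 (ε * a) (ε * b) h with h' | h'
    · right; unfold gle; rw [add_comm]; exact h'
    · left; exact h'

lemma gle_total' (hR : IsSupertropical R) {u v : R} (hu : ε * u = u) (hv : ε * v = v) :
    gle u v ∨ gle v u := by
  have := gle_total hR u v
  rwa [hu, hv] at this

lemma absorb (hR : IsSupertropical R) {s t : R} (h1 : gle (ε * t) (ε * s))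
    (h2 : ε * t = ε * s → s = ε * s) : s + t = s := by
  by_cases h : ε * t = ε * s
  · rw [add_comm s t, hR.2.2 t s h, ← h2 h]
  · rcases hR.2.1 s t (fun hh => h hh.symm) with h' | h'
    · exact h'
    · exfalso
      have h3 : ε * s + ε * t = ε * t := by rw [← mul_add, h']
      exact h (gle_antisymm h1 h3)

lemma absorb1 (hR : IsSupertropical R) {s r : R} (hs : ε * s = s) (h : gle (ε * r) s) :
    s + r = s :=
  absorb hR (by rw [hs]; exact h) (fun _ => hs.symm)

lemma add_eq_or (hR : IsSupertropical R) {u v : R} (hu : ε * u = u) (hv : ε * v = v) :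
    u + v = u ∨ u + v = v := by
  by_cases h : u = v
  · right
    have := hR.2.2 u v (by rw [h])
    rwa [hv] at this
  · exact hR.2.1 u v (by rw [hu, hv]; exact h)

lemma max4 (hR : IsSupertropical R) (z1 z2 z3 z4 s : R)
    (h : ε * z1 + ε * z2 + ε * z3 + ε * z4 = s) :
    ε * z1 = s ∨ ε * z2 = s ∨ ε * z3 = s ∨ ε * z4 = s := by
  have g1 := e_idem hR z1
  have g2 := e_idem hR z2
  have g3 := e_idem hR z3
  have g4 := e_idem hR z4
  rcases add_eq_or hR (gh_add (gh_add g1 g2) g3) g4 with h4 | h4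
  · rw [h4] at h
    rcases add_eq_or hR (gh_add g1 g2) g3 with h3 | h3
    · rw [h3] at h
      rcases add_eq_or hR g1 g2 with h2 | h2
      · rw [h2] at h; exact Or.inl h
      · rw [h2] at h; exact Or.inr (Or.inl h)
    · rw [h3] at h; exact Or.inr (Or.inr (Or.inl h))
  · rw [h4] at h; exact Or.inr (Or.inr (Or.inr h))

lemma amgm (hR : IsSupertropical R) (a c : R) :
    gle (ε * (a * c)) (ε * (a * a) + ε * (c * c)) := by
  rcases gle_total hR a c with h | h
  · have h1 : gle (ε * (a * c)) (ε * (c * c)) := gle_congr (by ring) (by ring) (gle_mul c h)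
    exact gle_trans h1 (gle_congr rfl (by ring) (gle_summand hR (c * c) (a * a)))
  · have h1 : gle (ε * (a * c)) (ε * (a * a)) :=
      gle_congr (by ring) (by ring) (gle_mul a h)
    exact gle_trans h1 (gle_congr rfl (by ring) (gle_summand hR (a * a) (c * c)))

end Aux
section Aux2

variable {R : Type*} [CommSemiring R]

local notation "ε" => eps R

lemma mem_ghost' {g : R} (hGh : ε * g = g) (h0 : g ≠ 0) : g ∈ ghost R :=
  ⟨⟨g, hGh⟩, by simpa using h0⟩

lemma ghost_ne_zero {g : R} (hg : g ∈ ghost R) : g ≠ 0 := by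
  have := hg.2; simpa using this

lemma gh_of_mem (hR : IsSupertropical R) {g : R} (hg : g ∈ ghost R) : ε * g = g := by
  obtain ⟨⟨g₀, hg₀⟩, -⟩ := hg
  rw [← hg₀]; exact e_idem hR g₀

lemma e_ne_zero (hsf : GhostSemifield R) : (eps R : R) ≠ 0 :=
  ghost_ne_zero hsf.1

lemma cancel' (hR : IsSupertropical R) (hsf : GhostSemifield R) {u v k : R}
    (hk0 : k ≠ 0) (hk : ε * k = k) (hu : ε * u = u) (hv : ε * v = v)
    (h : u * k = v * k) : u = v := by
  obtain ⟨k', hk'g, hkk'⟩ := hsf.2.2 k (mem_ghost' hk hk0)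
  have h3 := congrArg (· * k') h
  simp only [mul_assoc, hkk'] at h3
  rwa [mul_comm u (eps R), mul_comm v (eps R), hu, hv] at h3

lemma gle_cancel' (hR : IsSupertropical R) (hsf : GhostSemifield R) {u v k : R}
    (hk0 : k ≠ 0) (hk : ε * k = k) (hu : ε * u = u) (hv : ε * v = v)
    (h : gle (u * k) (v * k)) : gle u v := by
  obtain ⟨k', hk'g, hkk'⟩ := hsf.2.2 k (mem_ghost' hk hk0)
  unfold gle at h ⊢
  have h3 := congrArg (· * k') h
  simp only [add_mul, mul_assoc, hkk'] at h3
  rwa [mul_comm u (eps R), mul_comm v (eps R), hu, hv] at h3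

lemma sq_zero' (hR : IsSupertropical R) (hsf : GhostSemifield R) {u : R}
    (hu : ε * u = u) (h : u * u = 0) : u = 0 := by
  by_contra h0
  obtain ⟨k, hkg, hk⟩ := hsf.2.2 u (mem_ghost' hu h0)
  have : (eps R : R) = 0 := by
    calc (eps R : R) = ε * ε := (e_mul_e hR).symm
    _ = (u * k) * (u * k) := by rw [hk]
    _ = (u * u) * (k * k) := by ring
    _ = 0 := by rw [h, zero_mul]
  exact e_ne_zero hsf this

lemma gle_zero_right {u : R} (h : gle u 0) : u = 0 := by
  unfold gle at h; rwa [add_zero] at h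

lemma sqle' (hR : IsSupertropical R) (hsf : GhostSemifield R) {u v : R}
    (hu : ε * u = u) (hv : ε * v = v) (h : gle (u * u) (v * v)) : gle u v := by
  rcases gle_total' hR hu hv with h0 | hge
  · exact h0
  have h1 : gle (v * v) (u * v) := gle_mul v hge
  have h2 : gle (u * v) (u * u) := gle_congr (mul_comm v u) rfl (gle_mul u hge)
  have h3 : u * v = v * v := gle_antisymm (gle_trans h2 h) h1
  by_cases hv0 : v = 0
  · have h4 : u * u = 0 := by
      apply gle_zero_right; rw [hv0] at h; simpa using h
    rw [sq_zero' hR hsf hu h4, hv0]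
    exact gle_zero 0
  · rw [cancel' hR hsf hv0 hv hu hv h3]
    exact gle_refl' hR hv

lemma gt_of_ne (hR : IsSupertropical R) (hsf : GhostSemifield R) {g : R}
    (hg : g ∈ ghost R) (hne : g ≠ eps R) : ∃ c ∈ ghost R, glt (eps R) c := by
  have hGh : ε * g = g := gh_of_mem hR hg
  rcases gle_total' hR (e_mul_e hR) hGh with h | h
  · exact ⟨g, hg, h, fun hh => hne hh.symm⟩
  · obtain ⟨k, hkg, hk⟩ := hsf.2.2 g hg
    have hkGh : ε * k = k := gh_of_mem hR hkg
    have h1 : gle (eps R) k := gle_congr hk hkGh (gle_mul k h)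
    have h2 : (eps R : R) ≠ k := by
      intro hh
      apply hne
      have := hk
      rw [← hh] at this
      rwa [mul_comm, hGh] at this
    exact ⟨k, hkg, h1, h2⟩

end Aux2
section Aux3

variable {R : Type*} [CommSemiring R]

local notation "ε" => eps R

lemma exists_gt (hR : IsSupertropical R) (hsf : GhostSemifield R) (hnt : NontrivialG R) :
    ∃ c ∈ ghost R, glt (eps R) c := by
  by_contra hcon
  push_neg at hcon
  apply hnt
  ext z
  simp only [Set.mem_singleton_iff]
  constructor
  · intro hz
    by_contra hzne
    obtain ⟨c, hc, hlt⟩ := gt_of_ne hR hsf hz hzne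
    exact hcon c hc hlt
  · intro hz; rw [hz]; exact hsf.1

lemma key_min' (hR : IsSupertropical R) (hsf : GhostSemifield R) (hnt : NontrivialG R)
    {u v : R} (hu : ε * u = u) (hv : ε * v = v)
    (h : ∀ c ∈ ghost R, glt (eps R) c → gle (u * u) (c * (v * v))) : gle u v := by
  obtain ⟨c₁, hc₁g, hc₁⟩ := exists_gt hR hsf hnt
  by_cases hv0 : v = 0
  · have h0 := h c₁ hc₁g hc₁
    rw [hv0, mul_zero, mul_zero] at h0
    rw [sq_zero' hR hsf hu (gle_zero_right h0), hv0]
    exact gle_zero 0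
  by_cases huv : u = v
  · rw [huv]; exact gle_refl' hR hv
  rcases gle_total' hR hu hv with hle | hge
  · exact hle
  have hu0 : u ≠ 0 := by
    intro h0
    rw [h0] at hge
    exact hv0 (gle_zero_right hge)
  obtain ⟨k, hkg, hk⟩ := hsf.2.2 v (mem_ghost' hv hv0)
  have hkGh : ε * k = k := gh_of_mem hR hkg
  have hrv : (u * k) * v = u := by
    calc (u * k) * v = u * (v * k) := by ring
    _ = u * eps R := by rw [hk]
    _ = u := by rw [mul_comm, hu]
  have hr0 : u * k ≠ 0 := fun h0 => hu0 (by rw [← hrv, h0, zero_mul])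
  have hrGh : ε * (u * k) = u * k := gh_mul hu hkGh
  have hεr : gle (eps R) (u * k) :=
    gle_cancel' hR hsf hv0 hv (e_mul_e hR) hrGh (gle_congr hv.symm hrv.symm hge)
  have hrε : u * k ≠ eps R := by
    intro h0
    apply huv
    rw [← hrv, h0]; exact hv
  have hmin := h (u * k) (mem_ghost' hrGh hr0) ⟨hεr, fun hh => hrε hh.symm⟩
  have hvv0 : v * v ≠ 0 := fun hh => hv0 (sq_zero' hR hsf hv hh)
  have hvvGh : ε * (v * v) = v * v := gh_mul hv hv
  have hxx : ((u * k) * (u * k)) * (v * v) = u * u := by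
    calc ((u * k) * (u * k)) * (v * v) = (u * k * v) * (u * k * v) := by ring
    _ = u * u := by rw [hrv]
  have hrr : gle ((u * k) * (u * k)) (u * k) := by
    have h1 : gle (((u * k) * (u * k)) * (v * v)) ((u * k) * (v * v)) :=
      gle_congr hxx.symm rfl hmin
    exact gle_cancel' hR hsf hvv0 hvvGh (gh_mul hrGh hrGh) hrGh h1
  have h5 : gle (u * k) (eps R) :=
    gle_cancel' hR hsf hr0 hrGh hrGh (e_mul_e hR) (gle_congr rfl hrGh.symm hrr)
  exact absurd (gle_antisymm hεr h5) (fun hh => hrε hh.symm)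

lemma cross_max_i (hR : IsSupertropical R) (hsf : GhostSemifield R)
    {p qq s X : R} (hp : ε * p = p) (hq : ε * qq = qq) (hs : ε * s = s)
    (hXs : X = s) (hsq : gle (X * X) (p * qq))
    (hps : gle p s) (hqs : gle qq s) : p = s ∧ qq = s := by
  have h1 : gle (p * qq) (s * s) :=
    gle_trans (gle_mul qq hps) (gle_congr (mul_comm qq s) rfl (gle_mul s hqs))
  have h2 : p * qq = s * s := gle_antisymm h1 (gle_congr (by rw [hXs]) rfl hsq)
  by_cases hs0 : s = 0
  · constructor
    · rw [hs0] at hps ⊢; exact gle_zero_right hps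
    · rw [hs0] at hqs ⊢; exact gle_zero_right hqs
  · constructor
    · have hps' : p * s = s * s := by
        apply gle_antisymm (gle_mul s hps)
        rw [← h2]
        exact gle_congr (mul_comm qq p) (mul_comm s p) (gle_mul p hqs)
      exact cancel' hR hsf hs0 hs hp hs hps'
    · have hqs' : qq * s = s * s := by
        apply gle_antisymm (gle_mul s hqs)
        rw [← h2]
        exact gle_congr rfl (mul_comm s qq) (gle_mul qq hps)
      exact cancel' hR hsf hs0 hs hq hs hqs'

lemma cross_max_ii (hR : IsSupertropical R) (hsf : GhostSemifield R) (hnt : NontrivialG R)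
    {p qq s X : R} (hp : ε * p = p) (hq : ε * qq = qq) (hs : ε * s = s)
    (hXs : X = s)
    (hforall : ∀ c ∈ ghost R, glt (eps R) c → gle (X * X) (c * (p * qq)))
    (hps : gle p s) (hqs : gle qq s) : p = s ∨ qq = s := by
  by_cases hs0 : s = 0
  · left
    rw [hs0] at hps ⊢
    exact gle_zero_right hps
  obtain ⟨c₁, hc₁g, hc₁⟩ := exists_gt hR hsf hnt
  by_cases hpq0 : p * qq = 0
  · exfalso
    have h0 := hforall c₁ hc₁g hc₁
    rw [hpq0, mul_zero] at h0
    have : X * X = 0 := gle_zero_right h0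
    rw [hXs] at this
    exact hs0 (sq_zero' hR hsf hs this)
  by_contra hcon
  push_neg at hcon
  obtain ⟨hpne, hqne⟩ := hcon
  have hp0 : p ≠ 0 := fun h0 => hpq0 (by rw [h0, zero_mul])
  have hq0 : qq ≠ 0 := fun h0 => hpq0 (by rw [h0, mul_zero])
  obtain ⟨kp, hkpg, hkp⟩ := hsf.2.2 p (mem_ghost' hp hp0)
  obtain ⟨kq, hkqg, hkq⟩ := hsf.2.2 qq (mem_ghost' hq hq0)
  have hkpGh := gh_of_mem hR hkpg
  have hkqGh := gh_of_mem hR hkqg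
  have hr1p : (s * kp) * p = s := by
    calc (s * kp) * p = s * (p * kp) := by ring
    _ = s * eps R := by rw [hkp]
    _ = s := by rw [mul_comm, hs]
  have hr2q : (s * kq) * qq = s := by
    calc (s * kq) * qq = s * (qq * kq) := by ring
    _ = s * eps R := by rw [hkq]
    _ = s := by rw [mul_comm, hs]
  have hr1Gh : ε * (s * kp) = s * kp := gh_mul hs hkpGh
  have hr2Gh : ε * (s * kq) = s * kq := gh_mul hs hkqGh
  have hr10 : s * kp ≠ 0 := fun h0 => hs0 (by rw [← hr1p, h0, zero_mul])
  have hr20 : s * kq ≠ 0 := fun h0 => hs0 (by rw [← hr2q, h0, zero_mul])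
  have hεr1 : gle (eps R) (s * kp) :=
    gle_cancel' hR hsf hp0 hp (e_mul_e hR) hr1Gh (gle_congr hp.symm hr1p.symm hps)
  have hεr2 : gle (eps R) (s * kq) :=
    gle_cancel' hR hsf hq0 hq (e_mul_e hR) hr2Gh (gle_congr hq.symm hr2q.symm hqs)
  have hr1ε : s * kp ≠ eps R := by
    intro h0
    rw [h0, hp] at hr1p
    exact hpne hr1p
  have hr2ε : s * kq ≠ eps R := by
    intro h0
    rw [h0, hq] at hr2q
    exact hqne hr2q
  have hss : ((s * kp) * (s * kq)) * (p * qq) = s * s := by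
    calc ((s * kp) * (s * kq)) * (p * qq) = ((s * kp) * p) * ((s * kq) * qq) := by ring
    _ = s * s := by rw [hr1p, hr2q]
  have happ := hforall (s * kp) (mem_ghost' hr1Gh hr10) ⟨hεr1, fun hh => hr1ε hh.symm⟩
  have h4 : gle ((s * kp) * (s * kq)) (s * kp) := by
    apply gle_cancel' hR hsf hpq0 (gh_mul hp hq) (gh_mul hr1Gh hr2Gh) hr1Gh
    exact gle_congr (by rw [hXs, hss]) rfl happ
  have h5 : gle (s * kq) (eps R) := by
    apply gle_cancel' hR hsf hr10 hr1Gh hr2Gh (e_mul_e hR)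
    exact gle_congr (mul_comm _ _) hr1Gh.symm h4
  exact hr2ε (gle_antisymm hεr2 h5).symm

end Aux3
section Aux4

variable {R : Type*} [CommSemiring R]

local notation "ε" => eps R

lemma beta_core (hR : IsSupertropical R) (hsf : GhostSemifield R) {P bxx a c s : R}
    (hβ : gle (ε * bxx) (ε * P)) (hac : gle (ε * a) (ε * c))
    (hp1 : gle (ε * (a * a * P)) s) (hp2 : gle (ε * (c * c * P)) s)
    (hts : ε * (a * c * bxx) = s) :
    ∃ w, a * a * P + c * c * P = ε * w ∧ ε * w = s := by
  have hA : gle (ε * (a * c * bxx)) (ε * (a * c * P)) :=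
    gle_congr (by ring) (by ring) (gle_mul (a * c) hβ)
  have hB : gle (ε * (a * c * P)) (ε * (c * c * P)) :=
    gle_congr (by ring) (by ring) (gle_mul (c * P) hac)
  have hp2' : ε * (c * c * P) = s :=
    gle_antisymm hp2 (by rw [← hts]; exact gle_trans hA hB)
  have hacP : ε * (a * c * P) = s :=
    gle_antisymm (gle_trans hB hp2) (by rw [← hts]; exact hA)
  by_cases hk : ε * (c * P) = 0
  · have hs0 : s = 0 := by
      rw [← hp2']
      calc ε * (c * c * P) = (ε * (c * P)) * c := by ring
      _ = 0 := by rw [hk, zero_mul]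
    have z1 : a * a * P = 0 := by
      apply eq_zero hR
      have h5 := hp1
      rw [hs0] at h5
      exact gle_zero_right h5
    have z2 : c * c * P = 0 := by
      apply eq_zero hR
      rw [hp2', hs0]
    exact ⟨0, by rw [z1, z2, add_zero, mul_zero], by rw [mul_zero, hs0]⟩
  · have hacc : ε * a = ε * c := by
      apply cancel' hR hsf hk (e_idem hR (c * P)) (e_idem hR a) (e_idem hR c)
      calc (ε * a) * (ε * (c * P)) = ε * (ε * (a * c * P)) := by ring
      _ = s := by rw [e_idem hR, hacP]
      _ = ε * (ε * (c * c * P)) := by rw [e_idem hR, hp2']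
      _ = (ε * c) * (ε * (c * P)) := by ring
    have hp1' : ε * (a * a * P) = ε * (c * c * P) := by
      have e1 : ε * (a * a * P) = (ε * a) * ((ε * a) * P) := by
        rw [show (ε * a) * ((ε * a) * P) = ε * (ε * (a * a * P)) from by ring, e_idem hR]
      have e2 : (ε * c) * ((ε * c) * P) = ε * (c * c * P) := by
        rw [show (ε * c) * ((ε * c) * P) = ε * (ε * (c * c * P)) from by ring, e_idem hR]
      rw [e1, hacc, e2]
    exact ⟨c * c * P, hR.2.2 _ _ hp1', hp2'⟩

lemma master (hR : IsSupertropical R) (hsf : GhostSemifield R) (hnt : NontrivialG R)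
    (P Q B bxx byy : R) (hβ : gle (ε * bxx) (ε * P)) (hγ : gle (ε * byy) (ε * Q))
    (hcase : gle (ε * (B * B)) (ε * (P * Q)) ∨
      (P ∈ eSet R ∧ Q ∈ eSet R ∧
        ∀ c ∈ ghost R, glt (eps R) c → gle (ε * (B * B)) (c * (ε * (P * Q)))))
    (a a' c c' : R) (S : R)
    (hS : S = a * a * P + a' * a' * Q + a * a' * B +
      (c * c * P + c' * c' * Q + c * c' * B)) :
    S + (a * c * bxx + a * c' * B + a' * c * B + a' * c' * byy) = S := by
  have hp1s : gle (ε * (a * a * P)) (ε * S) :=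
    gle_congr rfl (by rw [hS]; ring)
      (gle_summand hR (a * a * P) (a' * a' * Q + a * a' * B + (c * c * P + c' * c' * Q + c * c' * B)))
  have hq1s : gle (ε * (a' * a' * Q)) (ε * S) :=
    gle_congr rfl (by rw [hS]; ring)
      (gle_summand hR (a' * a' * Q) (a * a * P + a * a' * B + (c * c * P + c' * c' * Q + c * c' * B)))
  have hm1s : gle (ε * (a * a' * B)) (ε * S) :=
    gle_congr rfl (by rw [hS]; ring)
      (gle_summand hR (a * a' * B) (a * a * P + a' * a' * Q + (c * c * P + c' * c' * Q + c * c' * B)))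
  have hp2s : gle (ε * (c * c * P)) (ε * S) :=
    gle_congr rfl (by rw [hS]; ring)
      (gle_summand hR (c * c * P) (a * a * P + a' * a' * Q + a * a' * B + (c' * c' * Q + c * c' * B)))
  have hq2s : gle (ε * (c' * c' * Q)) (ε * S) :=
    gle_congr rfl (by rw [hS]; ring)
      (gle_summand hR (c' * c' * Q) (a * a * P + a' * a' * Q + a * a' * B + (c * c * P + c * c' * B)))
  have hm2s : gle (ε * (c * c' * B)) (ε * S) :=
    gle_congr rfl (by rw [hS]; ring)
      (gle_summand hR (c * c' * B) (a * a * P + a' * a' * Q + a * a' * B + (c * c * P + c' * c' * Q)))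
  have ht1 : gle (ε * (a * c * bxx)) (ε * S) := by
    have h1 : gle (ε * (a * c * bxx)) (ε * (a * a * bxx) + ε * (c * c * bxx)) :=
      gle_congr (by ring) (by ring) (gle_mul bxx (amgm hR a c))
    have h2 : gle (ε * (a * a * bxx)) (ε * (a * a * P)) :=
      gle_congr (by ring) (by ring) (gle_mul (a * a) hβ)
    have h3 : gle (ε * (c * c * bxx)) (ε * (c * c * P)) :=
      gle_congr (by ring) (by ring) (gle_mul (c * c) hβ)
    exact gle_trans h1 (gle_add (gle_trans h2 hp1s) (gle_trans h3 hp2s))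
  have ht4 : gle (ε * (a' * c' * byy)) (ε * S) := by
    have h1 : gle (ε * (a' * c' * byy)) (ε * (a' * a' * byy) + ε * (c' * c' * byy)) :=
      gle_congr (by ring) (by ring) (gle_mul byy (amgm hR a' c'))
    have h2 : gle (ε * (a' * a' * byy)) (ε * (a' * a' * Q)) :=
      gle_congr (by ring) (by ring) (gle_mul (a' * a') hγ)
    have h3 : gle (ε * (c' * c' * byy)) (ε * (c' * c' * Q)) :=
      gle_congr (by ring) (by ring) (gle_mul (c' * c') hγ)
    exact gle_trans h1 (gle_add (gle_trans h2 hq1s) (gle_trans h3 hq2s))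
  have hpq12 : gle ((ε * (a * a * P)) * (ε * (c' * c' * Q))) ((ε * S) * (ε * S)) :=
    gle_trans (gle_mul (ε * (c' * c' * Q)) hp1s)
      (gle_congr (mul_comm _ _) rfl (gle_mul (ε * S) hq2s))
  have hpq21 : gle ((ε * (c * c * P)) * (ε * (a' * a' * Q))) ((ε * S) * (ε * S)) :=
    gle_trans (gle_mul (ε * (a' * a' * Q)) hp2s)
      (gle_congr (mul_comm _ _) rfl (gle_mul (ε * S) hq1s))
  have hbeta1 : ε * (a * c * bxx) = ε * S → S = ε * S := by
    intro hmax
    have hw : ∃ w, a * a * P + c * c * P = ε * w ∧ ε * w = ε * S := by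
      rcases gle_total hR a c with hac | hca
      · exact beta_core hR hsf hβ hac hp1s hp2s hmax
      · obtain ⟨w, hw1, hw2⟩ := beta_core hR hsf hβ hca hp2s hp1s
          (by rw [show ε * (c * a * bxx) = ε * (a * c * bxx) from by ring]; exact hmax)
        exact ⟨w, by rw [add_comm]; exact hw1, hw2⟩
    obtain ⟨w, hw1, hw2⟩ := hw
    calc S = (a * a * P + c * c * P) +
        (a' * a' * Q + (a * a' * B + (c' * c' * Q + c * c' * B))) := by rw [hS]; ring
    _ = ε * S + (a' * a' * Q + (a * a' * B + (c' * c' * Q + c * c' * B))) := by rw [hw1, hw2]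
    _ = ε * S := absorb1 hR (e_idem hR S)
        (gle_congr (by ring) rfl (gle_add hq1s (gle_add hm1s (gle_add hq2s hm2s))))
  have hbeta4 : ε * (a' * c' * byy) = ε * S → S = ε * S := by
    intro hmax
    have hw : ∃ w, a' * a' * Q + c' * c' * Q = ε * w ∧ ε * w = ε * S := by
      rcases gle_total hR a' c' with hac | hca
      · exact beta_core hR hsf hγ hac hq1s hq2s hmax
      · obtain ⟨w, hw1, hw2⟩ := beta_core hR hsf hγ hca hq2s hq1s
          (by rw [show ε * (c' * a' * byy) = ε * (a' * c' * byy) from by ring]; exact hmax)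
        exact ⟨w, by rw [add_comm]; exact hw1, hw2⟩
    obtain ⟨w, hw1, hw2⟩ := hw
    calc S = (a' * a' * Q + c' * c' * Q) +
        (a * a * P + (a * a' * B + (c * c * P + c * c' * B))) := by rw [hS]; ring
    _ = ε * S + (a * a * P + (a * a' * B + (c * c * P + c * c' * B))) := by rw [hw1, hw2]
    _ = ε * S := absorb1 hR (e_idem hR S)
        (gle_congr (by ring) rfl (gle_add hp1s (gle_add hm1s (gle_add hp2s hm2s))))
  rcases hcase with hBi | ⟨hPe, hQe, hBii⟩
  · have hXX2 : gle ((ε * (a * c' * B)) * (ε * (a * c' * B)))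
        ((ε * (a * a * P)) * (ε * (c' * c' * Q))) :=
      gle_congr (by ring) (by ring) (gle_mul (ε * (a * (a * (c' * c')))) hBi)
    have hXX3 : gle ((ε * (a' * c * B)) * (ε * (a' * c * B)))
        ((ε * (c * c * P)) * (ε * (a' * a' * Q))) :=
      gle_congr (by ring) (by ring) (gle_mul (ε * (a' * (a' * (c * c)))) hBi)
    have ht2 : gle (ε * (a * c' * B)) (ε * S) :=
      sqle' hR hsf (e_idem hR _) (e_idem hR _) (gle_trans hXX2 hpq12)
    have ht3 : gle (ε * (a' * c * B)) (ε * S) :=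
      sqle' hR hsf (e_idem hR _) (e_idem hR _) (gle_trans hXX3 hpq21)
    apply absorb hR
    · exact gle_congr (by ring) rfl (gle_add (gle_add (gle_add ht1 ht2) ht3) ht4)
    · intro hTS
      have hsum : ε * (a * c * bxx) + ε * (a * c' * B) + ε * (a' * c * B) +
          ε * (a' * c' * byy) = ε * S := by rw [← hTS]; ring
      rcases max4 hR _ _ _ _ _ hsum with hmax | hmax | hmax | hmax
      · exact hbeta1 hmax
      · obtain ⟨hpe, hqe⟩ := cross_max_i hR hsf (e_idem hR _) (e_idem hR _) (e_idem hR _)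
          hmax hXX2 hp1s hq2s
        have htie : a * a * P + c' * c' * Q = ε * (c' * c' * Q) :=
          hR.2.2 _ _ (by rw [hpe, hqe])
        calc S = (a * a * P + c' * c' * Q) +
            (a' * a' * Q + (a * a' * B + (c * c * P + c * c' * B))) := by rw [hS]; ring
        _ = ε * S + (a' * a' * Q + (a * a' * B + (c * c * P + c * c' * B))) := by
            rw [htie, hqe]
        _ = ε * S := absorb1 hR (e_idem hR S)
            (gle_congr (by ring) rfl (gle_add hq1s (gle_add hm1s (gle_add hp2s hm2s))))
      · obtain ⟨hpe, hqe⟩ := cross_max_i hR hsf (e_idem hR _) (e_idem hR _) (e_idem hR _)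
          hmax hXX3 hp2s hq1s
        have htie : c * c * P + a' * a' * Q = ε * (a' * a' * Q) :=
          hR.2.2 _ _ (by rw [hpe, hqe])
        calc S = (c * c * P + a' * a' * Q) +
            (a * a * P + (a * a' * B + (c' * c' * Q + c * c' * B))) := by rw [hS]; ring
        _ = ε * S + (a * a * P + (a * a' * B + (c' * c' * Q + c * c' * B))) := by
            rw [htie, hqe]
        _ = ε * S := absorb1 hR (e_idem hR S)
            (gle_congr (by ring) rfl (gle_add hp1s (gle_add hm1s (gle_add hq2s hm2s))))
      · exact hbeta4 hmax
  · have hGhP : ε * P = P := by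
      obtain ⟨p₀, hp₀⟩ := hPe
      rw [← hp₀]; exact e_idem hR p₀
    have hGhQ : ε * Q = Q := by
      obtain ⟨q₀, hq₀⟩ := hQe
      rw [← hq₀]; exact e_idem hR q₀
    have hfor2 : ∀ c₀ ∈ ghost R, glt (eps R) c₀ →
        gle ((ε * (a * c' * B)) * (ε * (a * c' * B)))
          (c₀ * ((ε * (a * a * P)) * (ε * (c' * c' * Q)))) := fun c₀ hc₀ hlt =>
      gle_congr (by ring) (by ring) (gle_mul (ε * (a * (a * (c' * c')))) (hBii c₀ hc₀ hlt))
    have hfor3 : ∀ c₀ ∈ ghost R, glt (eps R) c₀ →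
        gle ((ε * (a' * c * B)) * (ε * (a' * c * B)))
          (c₀ * ((ε * (c * c * P)) * (ε * (a' * a' * Q)))) := fun c₀ hc₀ hlt =>
      gle_congr (by ring) (by ring) (gle_mul (ε * (a' * (a' * (c * c)))) (hBii c₀ hc₀ hlt))
    have ht2 : gle (ε * (a * c' * B)) (ε * S) := by
      apply key_min' hR hsf hnt (e_idem hR _) (e_idem hR _)
      intro c₀ hc₀ hlt
      exact gle_trans (hfor2 c₀ hc₀ hlt)
        (gle_congr (mul_comm _ _) (mul_comm _ _) (gle_mul c₀ hpq12))
    have ht3 : gle (ε * (a' * c * B)) (ε * S) := by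
      apply key_min' hR hsf hnt (e_idem hR _) (e_idem hR _)
      intro c₀ hc₀ hlt
      exact gle_trans (hfor3 c₀ hc₀ hlt)
        (gle_congr (mul_comm _ _) (mul_comm _ _) (gle_mul c₀ hpq21))
    apply absorb hR
    · exact gle_congr (by ring) rfl (gle_add (gle_add (gle_add ht1 ht2) ht3) ht4)
    · intro hTS
      have hsum : ε * (a * c * bxx) + ε * (a * c' * B) + ε * (a' * c * B) +
          ε * (a' * c' * byy) = ε * S := by rw [← hTS]; ring
      rcases max4 hR _ _ _ _ _ hsum with hmax | hmax | hmax | hmax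
      · exact hbeta1 hmax
      · rcases cross_max_ii hR hsf hnt (e_idem hR _) (e_idem hR _) (e_idem hR _)
          hmax hfor2 hp1s hq2s with hpe | hqe
        · have hσ : a * a * P = ε * S := by
            rw [← hpe, show ε * (a * a * P) = a * a * (ε * P) from by ring, hGhP]
          calc S = (a * a * P) +
              (a' * a' * Q + (a * a' * B + (c * c * P + (c' * c' * Q + c * c' * B)))) := by
                rw [hS]; ring
          _ = ε * S + (a' * a' * Q + (a * a' * B + (c * c * P + (c' * c' * Q + c * c' * B)))) := by
                rw [hσ]
          _ = ε * S := absorb1 hR (e_idem hR S)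
              (gle_congr (by ring) rfl
                (gle_add hq1s (gle_add hm1s (gle_add hp2s (gle_add hq2s hm2s)))))
        · have hσ : c' * c' * Q = ε * S := by
            rw [← hqe, show ε * (c' * c' * Q) = c' * c' * (ε * Q) from by ring, hGhQ]
          calc S = (c' * c' * Q) +
              (a * a * P + (a' * a' * Q + (a * a' * B + (c * c * P + c * c' * B)))) := by
                rw [hS]; ring
          _ = ε * S + (a * a * P + (a' * a' * Q + (a * a' * B + (c * c * P + c * c' * B)))) := by
                rw [hσ]
          _ = ε * S := absorb1 hR (e_idem hR S)
              (gle_congr (by ring) rfl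
                (gle_add hp1s (gle_add hq1s (gle_add hm1s (gle_add hp2s hm2s)))))
      · rcases cross_max_ii hR hsf hnt (e_idem hR _) (e_idem hR _) (e_idem hR _)
          hmax hfor3 hp2s hq1s with hpe | hqe
        · have hσ : c * c * P = ε * S := by
            rw [← hpe, show ε * (c * c * P) = c * c * (ε * P) from by ring, hGhP]
          calc S = (c * c * P) +
              (a * a * P + (a' * a' * Q + (a * a' * B + (c' * c' * Q + c * c' * B)))) := by
                rw [hS]; ring
          _ = ε * S + (a * a * P + (a' * a' * Q + (a * a' * B + (c' * c' * Q + c * c' * B)))) := by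
                rw [hσ]
          _ = ε * S := absorb1 hR (e_idem hR S)
              (gle_congr (by ring) rfl
                (gle_add hp1s (gle_add hq1s (gle_add hm1s (gle_add hq2s hm2s)))))
        · have hσ : a' * a' * Q = ε * S := by
            rw [← hqe, show ε * (a' * a' * Q) = a' * a' * (ε * Q) from by ring, hGhQ]
          calc S = (a' * a' * Q) +
              (a * a * P + (a * a' * B + (c * c * P + (c' * c' * Q + c * c' * B)))) := by
                rw [hS]; ring
          _ = ε * S + (a * a * P + (a * a' * B + (c * c * P + (c' * c' * Q + c * c' * B)))) := by
                rw [hσ]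
          _ = ε * S := absorb1 hR (e_idem hR S)
              (gle_congr (by ring) rfl
                (gle_add hp1s (gle_add hm1s (gle_add hp2s (gle_add hq2s hm2s)))))
      · exact hbeta4 hmax

end Aux4
/-- if `(x,y)` is weakly CS, or both `q(x), q(y)` are ghost and `(x,y)`
is almost CS, then `q` is quasilinear on `Rx + Ry`. -/
theorem stmt5 {R : Type*} [CommSemiring R] (hR : IsSupertropical R)
    (hsf : GhostSemifield R) (hnt : NontrivialG R)
    {V : Type*} [AddCommMonoid V] [Module R V] (q : V → R) (b : V → V → R)
    (hqb : IsQuadPair q b) (x y : V) (hx : x ≠ 0) (hy : y ≠ 0)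
    (h : gle (eps R * (b x y) ^ 2) (eps R * (q x * q y)) ∨
      (q x ∈ eSet R ∧ q y ∈ eSet R ∧
        ∀ c ∈ ghost R, glt (eps R) c →
          gle (eps R * (b x y) ^ 2) (c * (eps R * (q x * q y))))) :
    QuasilinearOn q (Submodule.span R {x, y}) := by
  intro u hu v hv
  rw [Submodule.mem_span_pair] at hu hv
  obtain ⟨a, a', rfl⟩ := hu
  obtain ⟨c, c', rfl⟩ := hv
  obtain ⟨hsc, hsymm, haddl, hsmul, hqadd⟩ := hqb
  have hswap : ∀ (r : R) (w z : V), b w (r • z) = r * b w z := fun r w z => by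
    rw [hsymm w, hsmul, hsymm z]
  have haddr : ∀ (w z1 z2 : V), b w (z1 + z2) = b w z1 + b w z2 := fun w z1 z2 => by
    rw [hsymm w, haddl, hsymm z1, hsymm z2]
  have h2x : ∀ z : V, ((1 : R) + 1) • z = z + z := fun z => by rw [add_smul, one_smul]
  have heps : (eps R : R) = 1 + 1 := rfl
  have hgh : ∀ z : V, gle (eps R * b z z) (eps R * q z) := by
    intro z
    have hxx := hqadd z z
    rw [← h2x, hsc] at hxx
    have hb0 : eps R * q z + b z z = eps R * q z := by
      have e1 : eps R * q z + b z z = q z + q z + b z z := by rw [heps]; ring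
      have e2 : ((1 : R) + 1) ^ 2 * q z = eps R * q z := by
        rw [← heps, pow_two, e_mul_e hR]
      rw [e1, ← hxx]
      exact e2
    have e3 : eps R * b z z + eps R * q z = eps R * (eps R * q z + b z z) := by
      rw [mul_add, e_idem hR, add_comm]
    unfold gle
    rw [e3, hb0, e_idem hR]
  have hqexp : ∀ (a₁ a₂ : R), q (a₁ • x + a₂ • y) =
      a₁ * a₁ * q x + a₂ * a₂ * q y + a₁ * a₂ * b x y := by
    intro a₁ a₂
    rw [hqadd, hsc, hsc, hsmul, hswap, pow_two, pow_two]
    ring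
  have hbexp : b (a • x + a' • y) (c • x + c' • y) =
      a * c * b x x + a * c' * b x y + a' * c * b x y + a' * c' * b y y := by
    rw [haddl, haddr, haddr, hsmul, hsmul, hsmul, hsmul, hswap, hswap, hswap, hswap,
      hsymm y x]
    ring
  rw [hqadd (a • x + a' • y) (c • x + c' • y), hqexp, hqexp, hbexp]
  have hcase : gle (eps R * (b x y * b x y)) (eps R * (q x * q y)) ∨
      (q x ∈ eSet R ∧ q y ∈ eSet R ∧ ∀ c₀ ∈ ghost R, glt (eps R) c₀ →
        gle (eps R * (b x y * b x y)) (c₀ * (eps R * (q x * q y)))) := by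
    rcases h with h1 | ⟨h1, h2, h3⟩
    · left; rwa [pow_two] at h1
    · right
      refine ⟨h1, h2, fun c₀ hc₀ hlt => ?_⟩
      have h4 := h3 c₀ hc₀ hlt
      rwa [pow_two] at h4
  exact master hR hsf hnt (q x) (q y) (b x y) (b x x) (b y y) (hgh x) (hgh y) hcase
    a a' c c' _ rfl

end Supertrop
end

section
/- Let R be a supertropical semiring such that eR is a nontrivial semifield, and let (q,b) be a quadratic pair on an R-module V. Let x, y, w ∈ V be anisotropic with e·q(x+y) = e·(q(x)+q(y)). If moreover either (c1) q(x)·CS(y,w) = q(y)·CS(x,w), or (c2) CS(x,w) = CS(y,w), or (c3) e·q(x) = e·q(y), then CS(x+y, w) = CS(x,w) + CS(y,w). -/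
open scoped Classical

namespace Supertrop

section MyAux

variable {R : Type*} [CommSemiring R]

lemma my_ee (hR : IsSupertropical R) : eps R * eps R = eps R := by
  calc eps R * eps R = eps R + eps R := by unfold eps; ring
    _ = eps R := hR.1

lemma my_eidem (hR : IsSupertropical R) (a : R) : eps R * (eps R * a) = eps R * a := by
  rw [← mul_assoc, my_ee hR]

lemma my_double (hR : IsSupertropical R) (a : R) : a + a = eps R * a := hR.2.2 a a rfl

lemma my_ezero (hR : IsSupertropical R) {a : R} (h : eps R * a = 0) : a = 0 := by
  have h2 := hR.2.2 a 0 (by rw [h, mul_zero])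
  rw [mul_zero] at h2
  simpa using h2

lemma my_ghost_mem (hR : IsSupertropical R) {a : R} (ha : a ≠ 0) : eps R * a ∈ ghost R := by
  refine ⟨⟨a, rfl⟩, ?_⟩
  simp only [Set.mem_singleton_iff]
  exact fun h => ha (my_ezero hR h)

lemma my_mul_nz (hR : IsSupertropical R) (hsf : GhostSemifield R) {a b : R}
    (ha : a ≠ 0) (hb : b ≠ 0) : a * b ≠ 0 := by
  intro h
  have hg := hsf.2.1 _ (my_ghost_mem hR ha) _ (my_ghost_mem hR hb)
  have hz : eps R * a * (eps R * b) = 0 := by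
    calc eps R * a * (eps R * b) = eps R * eps R * (a * b) := by ring
      _ = 0 := by rw [h, mul_zero]
  rw [hz] at hg
  exact hg.2 rfl

lemma my_bipot (hR : IsSupertropical R) {u v : R} (hu : eps R * u = u)
    (hv : eps R * v = v) : u + v = u ∨ u + v = v := by
  by_cases h : eps R * u = eps R * v
  · right; rw [hR.2.2 u v h, hv]
  · exact hR.2.1 u v h

lemma my_cancel (inv : R → R)
    (hinv : ∀ g ∈ ghost R, inv g ∈ ghost R ∧ g * inv g = eps R)
    {g u v : R} (hg : g ∈ ghost R) (hu : eps R * u = u) (hv : eps R * v = v)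
    (h : u * g = v * g) : u = v := by
  have h2 := (hinv g hg).2
  have h3 : u * (g * inv g) = v * (g * inv g) := by
    rw [← mul_assoc, ← mul_assoc, h]
  rw [h2] at h3
  calc u = eps R * u := hu.symm
    _ = u * eps R := mul_comm _ _
    _ = v * eps R := h3
    _ = eps R * v := mul_comm _ _
    _ = v := hv

/-- Absorption of the middle term `e·αβ` by `e·α² + e·β²`. -/
lemma my_absorb (hR : IsSupertropical R) (hsf : GhostSemifield R) (inv : R → R)
    (hinv : ∀ g ∈ ghost R, inv g ∈ ghost R ∧ g * inv g = eps R) (α β : R) :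
    eps R * α ^ 2 + eps R * (α * β) + eps R * β ^ 2 =
      eps R * α ^ 2 + eps R * β ^ 2 := by
  by_cases hz : α * β = 0
  · rw [hz, mul_zero, add_zero]
  have heA : eps R * (eps R * α ^ 2) = eps R * α ^ 2 := my_eidem hR _
  have heB : eps R * (eps R * β ^ 2) = eps R * β ^ 2 := my_eidem hR _
  have heE : eps R * (eps R * (α * β)) = eps R * (α * β) := my_eidem hR _
  rcases my_bipot hR heA heE with h1 | h1
  · rw [h1]
  · rcases my_bipot hR heE heB with h2 | h2
    · -- bad case: A ≤ E and B ≤ E; then E = B and everything collapses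
      have hEg : eps R * (α * β) ∈ ghost R := my_ghost_mem hR hz
      have hEE : eps R * (α * β) * (eps R * (α * β)) =
          eps R * α ^ 2 * (eps R * β ^ 2) := by ring
      have k1 : eps R * α ^ 2 * (eps R * β ^ 2) +
          eps R * (α * β) * (eps R * β ^ 2) =
          eps R * (α * β) * (eps R * β ^ 2) := by rw [← add_mul, h1]
      have k2 : eps R * (α * β) * (eps R * (α * β)) +
          eps R * β ^ 2 * (eps R * (α * β)) =
          eps R * (α * β) * (eps R * (α * β)) := by rw [← add_mul, h2]
      have k3 : eps R * α ^ 2 * (eps R * β ^ 2) +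
          eps R * β ^ 2 * (eps R * (α * β)) =
          eps R * α ^ 2 * (eps R * β ^ 2) := by rw [← hEE]; exact k2
      have k4 : eps R * (α * β) * (eps R * β ^ 2) =
          eps R * α ^ 2 * (eps R * β ^ 2) := by
        calc eps R * (α * β) * (eps R * β ^ 2)
            = eps R * α ^ 2 * (eps R * β ^ 2) +
              eps R * (α * β) * (eps R * β ^ 2) := k1.symm
          _ = eps R * α ^ 2 * (eps R * β ^ 2) +
              eps R * β ^ 2 * (eps R * (α * β)) := by ring
          _ = eps R * α ^ 2 * (eps R * β ^ 2) := k3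
      have k5 : eps R * (α * β) * (eps R * (α * β)) =
          eps R * β ^ 2 * (eps R * (α * β)) := by
        calc eps R * (α * β) * (eps R * (α * β))
            = eps R * α ^ 2 * (eps R * β ^ 2) := hEE
          _ = eps R * (α * β) * (eps R * β ^ 2) := k4.symm
          _ = eps R * β ^ 2 * (eps R * (α * β)) := by ring
      have hEB : eps R * (α * β) = eps R * β ^ 2 :=
        my_cancel inv hinv hEg heE heB k5
      have lhs : eps R * α ^ 2 + eps R * (α * β) + eps R * β ^ 2 =
          eps R * (α * β) := by
        calc eps R * α ^ 2 + eps R * (α * β) + eps R * β ^ 2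
            = (eps R * α ^ 2 + eps R * (α * β)) + eps R * (α * β) := by rw [← hEB]
          _ = eps R * (α * β) + eps R * (α * β) := by rw [h1]
          _ = eps R * (eps R * (α * β)) := my_double hR _
          _ = eps R * (α * β) := heE
      have rhs : eps R * α ^ 2 + eps R * β ^ 2 = eps R * (α * β) := by
        rw [← hEB, h1]
      rw [lhs, rhs]
    · rw [add_assoc, h2]

/-- The key sub-lemma, under `P + Q = Q`, for conditions (c1) and (c2). -/
lemma my_sub (hR : IsSupertropical R) (hsf : GhostSemifield R) (inv : R → R)
    (hinv : ∀ g ∈ ghost R, inv g ∈ ghost R ∧ g * inv g = eps R)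
    {A B P Q : R} (hP : P ∈ ghost R) (hQ : Q ∈ ghost R)
    (heA : eps R * A = A) (heB : eps R * B = B)
    (heP : eps R * P = P) (heQ : eps R * Q = Q) (hPQ : P + Q = Q)
    (hcase : P * B * inv Q = Q * A * inv P ∨ A * inv P = B * inv Q) :
    A + B = B ∧ A * inv P + B * inv Q = B * inv Q := by
  have hPi := (hinv P hP).2
  have hQi := (hinv Q hQ).2
  rcases hcase with hc | hc
  · -- (c1)
    have h1 : P * B * inv Q * (P * Q) = B * P ^ 2 := by
      calc P * B * inv Q * (P * Q) = B * P ^ 2 * (Q * inv Q) := by ring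
        _ = eps R * B * P ^ 2 := by rw [hQi]; ring
        _ = B * P ^ 2 := by rw [heB]
    have h2 : Q * A * inv P * (P * Q) = A * Q ^ 2 := by
      calc Q * A * inv P * (P * Q) = A * Q ^ 2 * (P * inv P) := by ring
        _ = eps R * A * Q ^ 2 := by rw [hPi]; ring
        _ = A * Q ^ 2 := by rw [heA]
    have hBP2 : B * P ^ 2 = A * Q ^ 2 := by rw [← h1, ← h2, hc]
    have eAQ : eps R * (A * Q) = A * Q := by rw [← mul_assoc, heA]
    have eBP : eps R * (B * P) = B * P := by rw [← mul_assoc, heB]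
    -- (a) : A*Q + B*P = B*P
    have ha0 : (A * Q + B * P) * Q = (B * P) * Q := by
      calc (A * Q + B * P) * Q = A * Q ^ 2 + B * P * Q := by ring
        _ = B * P ^ 2 + B * P * Q := by rw [← hBP2]
        _ = B * P * (P + Q) := by ring
        _ = (B * P) * Q := by rw [hPQ]
    have eu : eps R * (A * Q + B * P) = A * Q + B * P := by
      rw [mul_add, eAQ, eBP]
    have ha : A * Q + B * P = B * P := my_cancel inv hinv hQ eu eBP ha0
    -- (i) : A + B = B
    have hBQ : B * Q = B * P + B * Q := by rw [← mul_add, hPQ]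
    have hi0 : (A + B) * Q = B * Q := by
      calc (A + B) * Q = A * Q + B * Q := by ring
        _ = A * Q + (B * P + B * Q) := by
            conv_lhs => rw [hBQ]
        _ = (A * Q + B * P) + B * Q := by ring
        _ = B * P + B * Q := by rw [ha]
        _ = B * Q := hBQ.symm
    have euAB : eps R * (A + B) = A + B := by rw [mul_add, heA, heB]
    have hi : A + B = B := my_cancel inv hinv hQ euAB heB hi0
    -- (ii) : A * inv P + B * inv Q = B * inv Q
    have hPQg : P * Q ∈ ghost R := hsf.2.1 _ hP _ hQ
    have hii0 : (A * inv P + B * inv Q) * (P * Q) = (B * inv Q) * (P * Q) := by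
      calc (A * inv P + B * inv Q) * (P * Q)
          = A * Q * (P * inv P) + B * P * (Q * inv Q) := by ring
        _ = eps R * (A * Q) + eps R * (B * P) := by rw [hPi, hQi]; ring
        _ = A * Q + B * P := by rw [eAQ, eBP]
        _ = B * P := ha
        _ = eps R * (B * P) := eBP.symm
        _ = B * P * (Q * inv Q) := by rw [hQi]; ring
        _ = (B * inv Q) * (P * Q) := by ring
    have eu2 : eps R * (A * inv P + B * inv Q) = A * inv P + B * inv Q := by
      rw [mul_add, ← mul_assoc, ← mul_assoc, heA, heB]
    have ev2 : eps R * (B * inv Q) = B * inv Q := by rw [← mul_assoc, heB]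
    exact ⟨hi, my_cancel inv hinv hPQg eu2 ev2 hii0⟩
  · -- (c2)
    have hA' : A * inv P * P = A := by
      calc A * inv P * P = A * (P * inv P) := by ring
        _ = eps R * A := by rw [hPi]; ring
        _ = A := heA
    have hB' : B * inv Q * Q = B := by
      calc B * inv Q * Q = B * (Q * inv Q) := by ring
        _ = eps R * B := by rw [hQi]; ring
        _ = B := heB
    have hAeq : A = B * inv Q * P := by rw [← hc]; exact hA'.symm
    have hi : A + B = B := by
      calc A + B = B * inv Q * (P + Q) := by rw [mul_add, ← hAeq, hB']
        _ = B * inv Q * Q := by rw [hPQ]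
        _ = B := hB'
    have hii : A * inv P + B * inv Q = B * inv Q := by
      rw [hc, my_double hR, ← mul_assoc, heB]
    exact ⟨hi, hii⟩

/-- The main abstract lemma. -/
lemma my_main (hR : IsSupertropical R) (hsf : GhostSemifield R) (inv : R → R)
    (hinv : ∀ g ∈ ghost R, inv g ∈ ghost R ∧ g * inv g = eps R)
    {A B P Q : R} (hP : P ∈ ghost R) (hQ : Q ∈ ghost R)
    (heA : eps R * A = A) (heB : eps R * B = B)
    (heP : eps R * P = P) (heQ : eps R * Q = Q)
    (hcase : P * B * inv Q = Q * A * inv P ∨ A * inv P = B * inv Q ∨ P = Q) :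
    (A + B) * inv (P + Q) = A * inv P + B * inv Q := by
  rcases hcase with hc | hc | hc
  · rcases my_bipot hR heP heQ with hPQ | hPQ
    · have hQP : Q + P = P := by rw [add_comm]; exact hPQ
      obtain ⟨hi, hii⟩ := my_sub hR hsf inv hinv hQ hP heB heA heQ heP hQP
        (Or.inl hc.symm)
      rw [hPQ, add_comm A B, hi, add_comm (A * inv P)]
      exact hii.symm
    · obtain ⟨hi, hii⟩ := my_sub hR hsf inv hinv hP hQ heA heB heP heQ hPQ
        (Or.inl hc)
      rw [hPQ, hi]
      exact hii.symm
  · rcases my_bipot hR heP heQ with hPQ | hPQ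
    · have hQP : Q + P = P := by rw [add_comm]; exact hPQ
      obtain ⟨hi, hii⟩ := my_sub hR hsf inv hinv hQ hP heB heA heQ heP hQP
        (Or.inr hc.symm)
      rw [hPQ, add_comm A B, hi, add_comm (A * inv P)]
      exact hii.symm
    · obtain ⟨hi, hii⟩ := my_sub hR hsf inv hinv hP hQ heA heB heP heQ hPQ
        (Or.inr hc)
      rw [hPQ, hi]
      exact hii.symm
  · subst hc
    have hPP : P + P = P := by rw [my_double hR P, heP]
    rw [hPP, add_mul]

/-- The core computation with squares. -/
lemma my_core (hR : IsSupertropical R) (hsf : GhostSemifield R) (inv : R → R)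
    (hinv : ∀ g ∈ ghost R, inv g ∈ ghost R ∧ g * inv g = eps R)
    {α β P Q : R} (hP : P ∈ ghost R) (hQ : Q ∈ ghost R)
    (heP : eps R * P = P) (heQ : eps R * Q = Q)
    (hcase : P * (eps R * β ^ 2) * inv Q = Q * (eps R * α ^ 2) * inv P ∨
      eps R * α ^ 2 * inv P = eps R * β ^ 2 * inv Q ∨ P = Q) :
    eps R * (α + β) ^ 2 * inv (P + Q) =
      eps R * α ^ 2 * inv P + eps R * β ^ 2 * inv Q := by
  have hd : α * β + α * β = eps R * (α * β) := my_double hR _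
  have step1 : eps R * (α + β) ^ 2 = eps R * α ^ 2 + eps R * β ^ 2 := by
    calc eps R * (α + β) ^ 2
        = eps R * α ^ 2 + eps R * (α * β + α * β) + eps R * β ^ 2 := by ring
      _ = eps R * α ^ 2 + eps R * (eps R * (α * β)) + eps R * β ^ 2 := by rw [hd]
      _ = eps R * α ^ 2 + eps R * (α * β) + eps R * β ^ 2 := by rw [my_eidem hR]
      _ = eps R * α ^ 2 + eps R * β ^ 2 := my_absorb hR hsf inv hinv α β
  rw [step1]
  exact my_main hR hsf inv hinv hP hQ (my_eidem hR _) (my_eidem hR _) heP heQ hcase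

end MyAux

/-- additivity of the CS-ratio when `q(x+y) ≅ν q(x)+q(y)` and one of
the conditions (c1), (c2), (c3) holds. -/
theorem stmt9 {R : Type*} [CommSemiring R] (hR : IsSupertropical R)
    (hsf : GhostSemifield R) (hnt : NontrivialG R)
    (inv : R → R) (hinv : ∀ g ∈ ghost R, inv g ∈ ghost R ∧ g * inv g = eps R)
    {V : Type*} [AddCommMonoid V] [Module R V] (q : V → R) (b : V → V → R)
    (hqb : IsQuadPair q b) (x y w : V)
    (hx : q x ≠ 0) (hy : q y ≠ 0) (hw : q w ≠ 0)
    (heq : eps R * q (x + y) = eps R * (q x + q y))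
    (hcase : q x * CSratio q b inv y w = q y * CSratio q b inv x w ∨
      CSratio q b inv x w = CSratio q b inv y w ∨
      eps R * q x = eps R * q y) :
    CSratio q b inv (x + y) w = CSratio q b inv x w + CSratio q b inv y w := by
  have hbxy : b (x + y) w = b x w + b y w := hqb.2.2.1 x y w
  have hP : eps R * (q x * q w) ∈ ghost R := my_ghost_mem hR (my_mul_nz hR hsf hx hw)
  have hQ : eps R * (q y * q w) ∈ ghost R := my_ghost_mem hR (my_mul_nz hR hsf hy hw)
  have heP : eps R * (eps R * (q x * q w)) = eps R * (q x * q w) := my_eidem hR _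
  have heQ : eps R * (eps R * (q y * q w)) = eps R * (q y * q w) := my_eidem hR _
  have hS : eps R * (q (x + y) * q w) =
      eps R * (q x * q w) + eps R * (q y * q w) := by
    calc eps R * (q (x + y) * q w) = eps R * q (x + y) * q w := by ring
      _ = eps R * (q x + q y) * q w := by rw [heq]
      _ = eps R * (q x * q w) + eps R * (q y * q w) := by ring
  simp only [CSratio] at hcase ⊢
  rw [hbxy, hS]
  refine my_core hR hsf inv hinv hP hQ heP heQ ?_
  rcases hcase with hc | hc | hc
  · left
    calc eps R * (q x * q w) * (eps R * b y w ^ 2) * inv (eps R * (q y * q w))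
        = eps R * q w * (q x * (eps R * b y w ^ 2 * inv (eps R * (q y * q w)))) := by
          ring
      _ = eps R * q w * (q y * (eps R * b x w ^ 2 * inv (eps R * (q x * q w)))) := by
          rw [hc]
      _ = eps R * (q y * q w) * (eps R * b x w ^ 2) * inv (eps R * (q x * q w)) := by
          ring
  · right; left; exact hc
  · right; right
    calc eps R * (q x * q w) = eps R * q x * q w := by ring
      _ = eps R * q y * q w := by rw [hc]
      _ = eps R * (q y * q w) := by ring

end Supertrop
end
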